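/- A hypergraph H=(V,E) admits a decomposition of its edge set into k edge-disjoint map-graphs (spanning subgraphs each admitting an orientation where every vertex has out-degree exactly one) if and only if H is (k,0)-tight, i.e. |E| = k|V| and every vertex-induced subgraph H'=(V',E') satisfies |E'| ≤ k|V'|. -/

import Mathlib

open Finset

/-- A hypergraph admits a decomposition of its edge set into `k` edge-disjoint
map-graphs (each admitting an orientation with every vertex of out-degree exactly one)
iff it is `(k,0)`-tight. -/
theorem stmt0 {V : Type*} [Fintype V] [DecidableEq V] (k : ℕ)
    (E : Finset (Finset V)) (hne : ∀ e ∈ E, e.Nonempty) :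
    (∃ (part : {e // e ∈ E} → Fin k) (τ : {e // e ∈ E} → V),
      (∀ e, τ e ∈ e.1) ∧
      ∀ j : Fin k, ∀ v : V,
        (Finset.univ.filter (fun e : {e // e ∈ E} => part e = j ∧ τ e = v)).card = 1) ↔
    (E.card = k * Fintype.card V ∧
      ∀ V' : Finset V, (E.filter (fun e => e ⊆ V')).card ≤ k * V'.card) := by
  classical
  constructor
  · rintro ⟨part, τ, hτ, huniq⟩
    have key : ∀ (a b : {e // e ∈ E}),
        part a = part b → τ a = τ b → a = b := by
      intro a b h1 h2
      have h := (huniq (part b) (τ b)).le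
      exact Finset.card_le_one.mp h a (by simp [h1, h2]) b (by simp)
    have hg : Function.Bijective (fun e : {e // e ∈ E} => ((part e, τ e) : Fin k × V)) := by
      constructor
      · intro a b hab
        simp only [Prod.mk.injEq] at hab
        exact key a b hab.1 hab.2
      · rintro ⟨j, v⟩
        obtain ⟨a, ha⟩ := Finset.card_eq_one.mp (huniq j v)
        have : a ∈ ({a} : Finset _) := mem_singleton_self a
        rw [← ha, mem_filter] at this
        exact ⟨a, by simp [this.2.1, this.2.2]⟩
    constructor
    · have := Fintype.card_of_bijective hg
      simpa [Fintype.card_coe, mul_comm] using this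
    · intro V'
      have hinj : Function.Injective
          (fun e : {e // e ∈ E.filter (fun e => e ⊆ V')} =>
            ((part ⟨e.1, (mem_filter.mp e.2).1⟩,
              (⟨τ ⟨e.1, (mem_filter.mp e.2).1⟩,
                (mem_filter.mp e.2).2 (hτ _)⟩ : {v // v ∈ V'})) : Fin k × {v // v ∈ V'})) := by
        intro a b hab
        simp only [Prod.mk.injEq, Subtype.mk.injEq] at hab
        have h := key _ _ hab.1 hab.2
        have h2 : (a : Finset V) = b := Subtype.mk_eq_mk.mp h
        exact Subtype.ext h2
      calc (E.filter (fun e => e ⊆ V')).card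
          = Fintype.card {e // e ∈ E.filter (fun e => e ⊆ V')} :=
            (Fintype.card_coe _).symm
        _ ≤ Fintype.card (Fin k × {v // v ∈ V'}) := Fintype.card_le_of_injective _ hinj
        _ = k * V'.card := by simp
  · rintro ⟨hcard, hsparse⟩
    have hall : ∀ s : Finset {e // e ∈ E},
        s.card ≤ (s.biUnion (fun e => e.1 ×ˢ (Finset.univ : Finset (Fin k)))).card := by
      intro s
      set V' := s.biUnion (fun e => e.1) with hV'
      have hprod : s.biUnion (fun e => e.1 ×ˢ (Finset.univ : Finset (Fin k)))
          = V' ×ˢ (Finset.univ : Finset (Fin k)) := by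
        ext ⟨v, j⟩
        simp only [mem_biUnion, mem_product, mem_univ, and_true, hV']
      rw [hprod, card_product, card_univ, Fintype.card_fin]
      have h1 : s.card ≤ (E.filter (fun e => e ⊆ V')).card := by
        apply Finset.card_le_card_of_injOn (fun e => e.1)
        · intro e he
          simp only [Finset.mem_coe, mem_filter]
          exact ⟨e.2, fun x hx => mem_biUnion.mpr ⟨e, he, hx⟩⟩
        · intro a _ b _ hab; exact Subtype.ext hab
      calc s.card ≤ k * V'.card := h1.trans (hsparse V')
        _ = V'.card * k := mul_comm _ _
    obtain ⟨f, hfinj, hfmem⟩ :=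
      (Finset.all_card_le_biUnion_card_iff_exists_injective
        (fun e : {e // e ∈ E} => e.1 ×ˢ (Finset.univ : Finset (Fin k)))).mp hall
    have hbij : Function.Bijective f :=
      (Fintype.bijective_iff_injective_and_card f).mpr
        ⟨hfinj, by simp [Fintype.card_coe, hcard, mul_comm]⟩
    refine ⟨fun e => (f e).2, fun e => (f e).1, fun e => ?_, ?_⟩
    · have := hfmem e; rw [mem_product] at this; exact this.1
    · intro j v
      obtain ⟨e₀, he₀⟩ := hbij.2 (v, j)
      rw [Finset.card_eq_one]
      refine ⟨e₀, ?_⟩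
      ext e
      simp only [mem_filter, mem_univ, true_and, mem_singleton]
      constructor
      · rintro ⟨h1, h2⟩
        apply hfinj
        rw [he₀]
        exact Prod.ext h2 h1
      · rintro rfl
        rw [he₀]
        exact ⟨rfl, rfl⟩
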